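/- For n ≥ 1, the number of partial permutations of length n with one hole avoiding 1234 equals binomial(2n−2, n−1). Equivalently, s_n^1(1234) = n·C_{n−1} where C_m is the m-th Catalan number. -/

import Mathlib

open Finset

/-- The word `σ` contains the pattern `p`: there is a subsequence of `σ`
order-isomorphic to `p`. -/
def ContainsPat {n ℓ : ℕ} {α β : Type*} [LinearOrder α] [LinearOrder β]
    (σ : Fin n → α) (p : Fin ℓ → β) : Prop :=
  ∃ g : Fin ℓ → Fin n, StrictMono g ∧ ∀ a b : Fin ℓ, σ (g a) < σ (g b) ↔ p a < p b

/-- `σ ∈ S_n` is an extension of the partial permutation `π`: on the non-hole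
positions, the relative order of the values of `σ` matches that of `π`. -/
def IsExtension {n : ℕ} {α : Type*} [LinearOrder α]
    (σ : Equiv.Perm (Fin n)) (π : Fin n → Option α) : Prop :=
  ∀ i j : Fin n, ∀ vi vj : α, π i = some vi → π j = some vj → (σ i < σ j ↔ vi < vj)

/-- The partial permutation `π` avoids the pattern `p`: every extension avoids `p`. -/
def PPAvoids {n ℓ : ℕ} {α β : Type*} [LinearOrder α] [LinearOrder β]
    (π : Fin n → Option α) (p : Fin ℓ → β) : Prop :=
  ∀ σ : Equiv.Perm (Fin n), IsExtension σ π → ¬ ContainsPat (⇑σ) p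

/-- `π` is a partial permutation of length `n` with `k` holes: each value of
`{1,…,n-k}` appears exactly once and there are exactly `k` holes. -/
def IsPPerm {n : ℕ} (k : ℕ) (π : Fin n → Option (Fin (n - k))) : Prop :=
  (Finset.univ.filter fun i => π i = none).card = k ∧
    ∀ v : Fin (n - k), ∃! i : Fin n, π i = some v

/-- `π` is a partial permutation whose holes are exactly at the positions in `H`. -/
def IsPPermH {n : ℕ} (H : Finset (Fin n)) (π : Fin n → Option (Fin (n - H.card))) : Prop :=
  (∀ i, π i = none ↔ i ∈ H) ∧ ∀ v : Fin (n - H.card), ∃! i : Fin n, π i = some v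

/-- `s_n^k(p)`: the number of `p`-avoiding partial permutations of length `n`
with `k` holes. -/
noncomputable def snk (n k : ℕ) {ℓ : ℕ} (p : Fin ℓ → Fin ℓ) : ℕ :=
  Nat.card {π : Fin n → Option (Fin (n - k)) // IsPPerm k π ∧ PPAvoids π p}

/-- `s_n^H(p)`: the number of `p`-avoiding partial permutations of length `n`
with hole set `H`. -/
noncomputable def snH {n ℓ : ℕ} (H : Finset (Fin n)) (p : Fin ℓ → Fin ℓ) : ℕ :=
  Nat.card {π : Fin n → Option (Fin (n - H.card)) // IsPPermH H π ∧ PPAvoids π p}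

/-- The number of permutations of length `m` avoiding the pattern `p`. -/
noncomputable def avoidCount (m : ℕ) {ℓ : ℕ} (p : Fin ℓ → Fin ℓ) : ℕ :=
  Nat.card {σ : Equiv.Perm (Fin m) // ¬ ContainsPat (⇑σ) p}

/-- `p` is a Baxter permutation: no indices `a < b < c = b+1 < d` such that
`(p a, p b, p c, p d)` is order-isomorphic to `2413` or `3142`. -/
def IsBaxter {ℓ : ℕ} (p : Fin ℓ → Fin ℓ) : Prop :=
  ¬ ∃ a b c d : Fin ℓ, a < b ∧ (b : ℕ) + 1 = (c : ℕ) ∧ c < d ∧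
    ((p c < p a ∧ p a < p d ∧ p d < p b) ∨ (p b < p d ∧ p d < p a ∧ p a < p c))

namespace PP1234


/-- Staircase functions: antitone, vanish beyond `m`, below the antidiagonal. -/
def SF (m : ℕ) : Type :=
  {f : ℕ → ℕ // (∀ x, m ≤ x → f x = 0) ∧ Antitone f ∧ ∀ x, x < m → f x + x < m}

instance SF.finite (m : ℕ) : Finite (SF m) := by
  apply Finite.of_injective
    (fun f : SF m => (fun x : Fin m => (⟨f.1 x, by have := f.2.2.2 x x.2; omega⟩ : Fin m)))
  rintro ⟨f, hf0, hfa, hfb⟩ ⟨g, hg0, hga, hgb⟩ h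
  apply Subtype.ext
  funext x
  show f x = g x
  by_cases hx : x < m
  · have := congrFun h ⟨x, hx⟩
    simpa using congrArg Fin.val this
  · rw [hf0 x (le_of_not_gt hx), hg0 x (le_of_not_gt hx)]

/-- glue together two staircase functions -/
def sfFun (m : ℕ) (d : Σ r : Fin (m+1), SF r × SF (m - r)) : SF (m+1) := by
  obtain ⟨r, g, h⟩ := d
  refine ⟨fun x => if x < (r : ℕ) then g.1 x + (m - r) else if x = (r : ℕ) then m - r
       else h.1 (x - ((r : ℕ)+1)), ?_, ?_, ?_⟩
  · have hrm : (r : ℕ) ≤ m := by omega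
    intro x hx
    dsimp only
    rw [if_neg (by omega), if_neg (by omega)]
    exact h.2.1 _ (by omega)
  · have hrm : (r : ℕ) ≤ m := by omega
    have hhle : ∀ x, h.1 x ≤ m - r := by
      intro x
      by_cases hx : x < m - (r : ℕ)
      · have := h.2.2.2 x hx; omega
      · rw [h.2.1 x (by omega)]; exact Nat.zero_le _
    intro a b hab
    dsimp only
    rcases lt_trichotomy b (r : ℕ) with hb | hb | hb
    · rw [if_pos hb, if_pos (by omega)]
      exact Nat.add_le_add_right (g.2.2.1 hab) _
    · rw [if_neg (by omega), if_pos hb]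
      by_cases ha : a < (r : ℕ)
      · rw [if_pos ha]; omega
      · rw [if_neg ha, if_pos (by omega)]
    · rw [if_neg (by omega), if_neg (by omega)]
      by_cases ha : a < (r : ℕ)
      · rw [if_pos ha]; have := hhle (b - ((r:ℕ)+1)); omega
      · by_cases ha2 : a = (r : ℕ)
        · rw [if_neg (by omega), if_pos ha2]
          have := hhle (b - ((r:ℕ)+1)); omega
        · rw [if_neg (by omega), if_neg ha2]
          exact h.2.2.1 (by omega)
  · have hrm : (r : ℕ) ≤ m := by omega
    intro x hx
    dsimp only
    rcases lt_trichotomy x (r : ℕ) with hb | hb | hb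
    · rw [if_pos hb]
      have := g.2.2.2 x hb
      omega
    · rw [if_neg (by omega), if_pos hb]; omega
    · rw [if_neg (by omega), if_neg (by omega)]
      by_cases hx2 : x - ((r:ℕ)+1) < m - (r:ℕ)
      · have := h.2.2.2 _ hx2; omega
      · rw [h.2.1 _ (by omega)]; omega

lemma sfFun_apply (m : ℕ) (r : Fin (m+1)) (g : SF r) (h : SF (m - r)) (x : ℕ) :
    (sfFun m ⟨r, g, h⟩).1 x = if x < (r : ℕ) then g.1 x + (m - r) else if x = (r : ℕ) then m - r
       else h.1 (x - ((r : ℕ)+1)) := rfl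

/-- the glue point is the first touch of the antidiagonal -/
lemma sfFun_touch (m : ℕ) (r : Fin (m+1)) (g : SF r) (h : SF (m - r)) :
    ((sfFun m ⟨r, g, h⟩).1 (r : ℕ) + (r : ℕ) = m) ∧
      ∀ x < (r : ℕ), (sfFun m ⟨r, g, h⟩).1 x + x ≠ m := by
  have hrm : (r : ℕ) ≤ m := by omega
  constructor
  · rw [sfFun_apply, if_neg (by omega), if_pos rfl]; omega
  · intro x hx
    rw [sfFun_apply, if_pos hx]
    have := g.2.2.2 x hx
    omega

lemma sfFun_injective (m : ℕ) : Function.Injective (sfFun m) := by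
  rintro ⟨r, g, h⟩ ⟨r', g', h'⟩ heq
  have heq1 : ∀ x, (sfFun m ⟨r, g, h⟩).1 x = (sfFun m ⟨r', g', h'⟩).1 x := by
    intro x; rw [heq]
  have hr : r = r' := by
    have t1 := sfFun_touch m r g h
    have t2 := sfFun_touch m r' g' h'
    rcases lt_trichotomy (r : ℕ) (r' : ℕ) with hc | hc | hc
    · exact absurd (by rw [heq1] at t1; exact t2.2 _ hc t1.1) (by simp)
    · exact Fin.ext hc
    · exact absurd (by rw [← heq1] at t2; exact t1.2 _ hc t2.1) (by simp)
  subst hr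
  have hrm : (r : ℕ) ≤ m := by omega
  have hg : g = g' := by
    apply Subtype.ext; funext x
    by_cases hx : x < (r : ℕ)
    · have := heq1 x
      rw [sfFun_apply, sfFun_apply, if_pos hx, if_pos hx] at this
      omega
    · rw [g.2.1 x (by omega), g'.2.1 x (by omega)]
  have hh : h = h' := by
    apply Subtype.ext; funext x
    have := heq1 ((r : ℕ) + 1 + x)
    rw [sfFun_apply, sfFun_apply, if_neg (by omega), if_neg (by omega),
      if_neg (by omega), if_neg (by omega)] at this
    simpa using this
  rw [hg, hh]

lemma sfFun_surjective (m : ℕ) : Function.Surjective (sfFun m) := by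
  intro f
  have hex : ∃ x, f.1 x + x = m := by
    refine ⟨m, ?_⟩
    have := f.2.2.2 m (Nat.lt_succ_self m)
    omega
  set r := Nat.find hex with hrdef
  have hr : f.1 r + r = m := Nat.find_spec hex
  have hrm : r ≤ m := Nat.find_min' hex (by have := f.2.2.2 m (Nat.lt_succ_self m); omega)
  have hlt : ∀ x, x < r → f.1 x + x < m := by
    intro x hx
    have h1 := Nat.find_min hex hx
    have h2 : f.1 x + x < m + 1 := f.2.2.2 x (by omega)
    omega
  have hfr : ∀ x, x ≤ r → m - r ≤ f.1 x := by
    intro x hx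
    have := f.2.2.1 hx
    omega
  clear_value r
  refine ⟨⟨⟨r, by omega⟩,
    ⟨fun x => if x < r then f.1 x - (m - r) else 0, ?_, ?_, ?_⟩,
    ⟨fun x => f.1 (r + 1 + x), ?_, ?_, ?_⟩⟩, ?_⟩
  · intro x hx
    simp only [Fin.val_mk] at hx
    dsimp only
    rw [if_neg (by omega)]
  · intro a b hab
    dsimp only
    by_cases hb : b < r
    · rw [if_pos hb, if_pos (by omega)]
      exact Nat.sub_le_sub_right (f.2.2.1 hab) _
    · rw [if_neg hb]; exact Nat.zero_le _
  · intro x hx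
    simp only [Fin.val_mk] at hx ⊢
    rw [if_pos hx]
    have := hfr x (by omega)
    have := hlt x hx
    omega
  · intro x hx
    simp only [Fin.val_mk] at hx
    exact f.2.1 _ (by omega)
  · intro a b hab
    exact f.2.2.1 (by omega : r + 1 + a ≤ r + 1 + b)
  · intro x hx
    simp only [Fin.val_mk] at hx ⊢
    have := f.2.2.2 (r + 1 + x) (by omega)
    omega
  · apply Subtype.ext
    funext x
    refine (sfFun_apply m _ _ _ x).trans ?_
    simp only [Fin.val_mk]
    rcases lt_trichotomy x r with hx | hx | hx
    · rw [if_pos hx, if_pos hx]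
      have := hfr x (by omega)
      omega
    · rw [if_neg (by omega), if_pos hx, hx]
      omega
    · rw [if_neg (by omega), if_neg (by omega)]
      have hxx : r + 1 + (x - (r + 1)) = x := by omega
      rw [hxx]

theorem card_SF : ∀ m, Nat.card (SF m) = catalan m := by
  intro m
  induction m using Nat.strong_induction_on with
  | _ m ih =>
    match m with
    | 0 =>
      haveI : Unique (SF 0) := by
        refine ⟨⟨⟨fun _ => 0, fun x _ => rfl, fun _ _ _ => le_rfl, fun x hx => absurd hx (by omega)⟩⟩, ?_⟩
        rintro ⟨f, h0, ha, hb⟩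
        apply Subtype.ext
        funext x
        exact h0 x (Nat.zero_le x)
      rw [Nat.card_unique, catalan_zero]
    | m + 1 =>
      have hbij := (Equiv.ofBijective (sfFun m) ⟨sfFun_injective m, sfFun_surjective m⟩)
      rw [← Nat.card_congr hbij]
      letI : ∀ k, Fintype (SF k) := fun k => Fintype.ofFinite _
      rw [Nat.card_eq_fintype_card, Fintype.card_sigma]
      rw [catalan_succ]
      congr 1
      funext r
      rw [Fintype.card_prod, ← Nat.card_eq_fintype_card, ← Nat.card_eq_fintype_card,
        ih r (by omega), ih (m - r) (by omega)]






/-! ### Pattern helpers -/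

lemma containsPat_id_iff {n ℓ : ℕ} {α : Type*} [LinearOrder α] (σ : Fin n → α) :
    ContainsPat σ (id : Fin ℓ → Fin ℓ) ↔ ∃ g : Fin ℓ → Fin n, StrictMono g ∧ StrictMono (σ ∘ g) := by
  constructor
  · rintro ⟨g, hg, hp⟩
    exact ⟨g, hg, fun a b hab => (hp a b).2 hab⟩
  · rintro ⟨g, hg, hsg⟩
    refine ⟨g, hg, fun a b => ?_⟩
    simp only [id]
    constructor
    · intro h
      rcases lt_trichotomy a b with hc | hc | hc
      · exact hc
      · subst hc; exact absurd h (lt_irrefl _)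
      · exact absurd h (not_lt.2 (le_of_lt (hsg hc)))
    · exact fun h => hsg h

lemma strictMono_vec3 {α : Type*} [Preorder α] {a b c : α} (h1 : a < b) (h2 : b < c) :
    StrictMono ![a, b, c] := by
  intro i j hij
  fin_cases i <;> fin_cases j <;> simp_all <;>
    first
      | exact h1
      | exact h2
      | exact h1.trans h2

lemma strictMono_vec4 {α : Type*} [Preorder α] {a b c d : α}
    (h1 : a < b) (h2 : b < c) (h3 : c < d) : StrictMono ![a, b, c, d] := by
  intro i j hij
  fin_cases i <;> fin_cases j <;> simp_all <;>
    first
      | exact h1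
      | exact h2
      | exact h3
      | exact h1.trans h2
      | exact h2.trans h3
      | exact (h1.trans h2).trans h3

lemma containsPat3_of {m : ℕ} {α : Type*} [LinearOrder α] (σ : Fin m → α) (a b c : Fin m)
    (hab : a < b) (hbc : b < c) (h1 : σ a < σ b) (h2 : σ b < σ c) :
    ContainsPat σ (id : Fin 3 → Fin 3) := by
  rw [containsPat_id_iff]
  refine ⟨![a, b, c], strictMono_vec3 hab hbc, ?_⟩
  have : σ ∘ ![a, b, c] = ![σ a, σ b, σ c] := by
    funext i; fin_cases i <;> simp
  rw [this]
  exact strictMono_vec3 h1 h2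

lemma containsPat4_of {m : ℕ} {α : Type*} [LinearOrder α] (σ : Fin m → α) (a b c d : Fin m)
    (hab : a < b) (hbc : b < c) (hcd : c < d)
    (h1 : σ a < σ b) (h2 : σ b < σ c) (h3 : σ c < σ d) :
    ContainsPat σ (id : Fin 4 → Fin 4) := by
  rw [containsPat_id_iff]
  refine ⟨![a, b, c, d], strictMono_vec4 hab hbc hcd, ?_⟩
  have : σ ∘ ![a, b, c, d] = ![σ a, σ b, σ c, σ d] := by
    funext i; fin_cases i <;> simp
  rw [this]
  exact strictMono_vec4 h1 h2 h3

lemma containsPat3_elim {m : ℕ} {α : Type*} [LinearOrder α] {σ : Fin m → α}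
    (h : ContainsPat σ (id : Fin 3 → Fin 3)) :
    ∃ a b c : Fin m, a < b ∧ b < c ∧ σ a < σ b ∧ σ b < σ c := by
  rw [containsPat_id_iff] at h
  obtain ⟨g, hg, hsg⟩ := h
  exact ⟨g 0, g 1, g 2, hg (by decide), hg (by decide), hsg (by decide), hsg (by decide)⟩

/-! ### Running minimum -/

section RM

variable {m : ℕ} [NeZero m]

lemma posSet_nonempty (x : ℕ) : (univ.filter fun y : Fin m => (y : ℕ) ≤ x).Nonempty :=
  ⟨⟨0, Nat.pos_of_ne_zero (NeZero.ne m)⟩, by simp⟩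

/-- The running minimum of `σ` on positions `0,…,x`. -/
noncomputable def rm (σ : Fin m → Fin m) (x : ℕ) : ℕ :=
  (univ.filter fun y : Fin m => (y : ℕ) ≤ x).inf' (posSet_nonempty x) fun y => (σ y : ℕ)

lemma rm_le (σ : Fin m → Fin m) {x : ℕ} {y : Fin m} (hy : (y : ℕ) ≤ x) :
    rm σ x ≤ σ y :=
  Finset.inf'_le _ (by simp [hy])

lemma rm_exists (σ : Fin m → Fin m) (x : ℕ) :
    ∃ y : Fin m, (y : ℕ) ≤ x ∧ (σ y : ℕ) = rm σ x := by
  obtain ⟨y, hy, hv⟩ := Finset.exists_mem_eq_inf' (posSet_nonempty x)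
    (fun y : Fin m => (σ y : ℕ))
  exact ⟨y, by simpa using hy, hv.symm⟩

lemma rm_antitone (σ : Fin m → Fin m) : Antitone (rm σ) := by
  intro x y hxy
  obtain ⟨z, hz, hv⟩ := rm_exists σ x
  rw [← hv]
  exact rm_le σ (hz.trans hxy)

lemma rm_zero_of_ge (σ : Equiv.Perm (Fin m)) {x : ℕ} (hx : m ≤ x) : rm ⇑σ x = 0 := by
  have h := rm_le (⇑σ) (x := x) (y := σ.symm ⟨0, Nat.pos_of_ne_zero (NeZero.ne m)⟩)
    (le_trans (Nat.le_of_lt_succ (Nat.lt_succ_of_lt (Fin.is_lt _))) (by omega))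
  simpa using h

lemma rm_bound (σ : Fin m → Fin m) (hσ : Function.Injective σ) {x : ℕ} (hx : x < m) :
    rm σ x + x < m := by
  by_contra hc
  push_neg at hc
  obtain ⟨y, hy, hyv⟩ := rm_exists σ x
  have hrm_lt : rm σ x < m := hyv ▸ (σ y).2
  have hsub : (univ.filter fun y : Fin m => (y : ℕ) ≤ x).image σ ⊆ Ici ⟨rm σ x, hrm_lt⟩ := by
    intro v hv
    obtain ⟨z, hz, rfl⟩ := Finset.mem_image.1 hv
    rw [Finset.mem_filter] at hz
    rw [Finset.mem_Ici]
    exact rm_le σ hz.2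
  have hcard1 : (univ.filter fun y : Fin m => (y : ℕ) ≤ x).card = x + 1 := by
    have he : (univ.filter fun y : Fin m => (y : ℕ) ≤ x) = Iic (⟨x, hx⟩ : Fin m) := by
      ext y; simp [Fin.le_def]
    rw [he, Fin.card_Iic]
  have hle := Finset.card_le_card hsub
  rw [Finset.card_image_of_injective _ hσ, hcard1, Fin.card_Ici] at hle
  simp only [Fin.val_mk] at hle
  omega

/-- `x` is a left-to-right minimum position characterization. -/
lemma sigma_eq_rm_iff (σ : Equiv.Perm (Fin m)) (x : Fin m) :
    (∀ y : Fin m, y < x → rm ⇑σ ↑x < rm ⇑σ ↑y) ↔ (σ x : ℕ) = rm ⇑σ ↑x := by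
  constructor
  · intro h
    obtain ⟨z, hz, hv⟩ := rm_exists ⇑σ ↑x
    rcases eq_or_lt_of_le hz with heq | hlt
    · have hzx : z = x := Fin.ext heq
      rw [← hv, hzx]
    · exfalso
      have h1 : rm ⇑σ ↑z ≤ σ z := rm_le ⇑σ le_rfl
      have h2 := h z (by rwa [Fin.lt_def])
      omega
  · intro h y hy
    have hle : rm ⇑σ ↑x ≤ rm ⇑σ ↑y := rm_antitone ⇑σ (le_of_lt hy)
    rcases eq_or_lt_of_le hle with heq | hlt
    · exfalso
      obtain ⟨z, hz, hv⟩ := rm_exists ⇑σ ↑y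
      have : σ z = σ x := Fin.ext (by omega)
      have hzx : z = x := σ.injective this
      subst hzx
      rw [Fin.lt_def] at hy
      omega
    · exact hlt

lemma rm_lt_of_not_min (σ : Equiv.Perm (Fin m)) (x : Fin m)
    (h : (σ x : ℕ) ≠ rm ⇑σ ↑x) : rm ⇑σ ↑x < σ x := by
  have := rm_le (⇑σ) (x := (x:ℕ)) (y := x) le_rfl
  omega

/-- in a 123-avoiding permutation, the non-left-to-right-minima are decreasing -/
lemma avoid_strictAnti (σ : Equiv.Perm (Fin m)) (hav : ¬ ContainsPat ⇑σ (id : Fin 3 → Fin 3))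
    {x y : Fin m} (hxy : x < y) (hx : (σ x : ℕ) ≠ rm ⇑σ ↑x) (hy : (σ y : ℕ) ≠ rm ⇑σ ↑y) :
    σ y < σ x := by
  rcases lt_trichotomy (σ x) (σ y) with hc | hc | hc
  · exfalso
    obtain ⟨z, hz, hv⟩ := rm_exists ⇑σ ↑x
    have hzx : z < x := by
      rcases eq_or_lt_of_le hz with heq | hlt
      · exfalso; apply hx
        have hzx : z = x := Fin.ext heq
        rw [← hv, hzx]
      · rwa [Fin.lt_def]
    have h1 : σ z < σ x := by
      have := rm_lt_of_not_min σ x hx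
      rw [Fin.lt_def]
      omega
    exact hav (containsPat3_of ⇑σ z x y hzx hxy h1 hc)
  · exact absurd (σ.injective hc) (ne_of_lt hxy)
  · exact hc

end RM

/-! ### uniqueness of strictly decreasing enumeration -/

lemma strictAntiOn_unique {m : ℕ} {s : Finset (Fin m)} {g g' : Fin m → Fin m}
    (hg : StrictAntiOn g ↑s) (hg' : StrictAntiOn g' ↑s) (him : s.image g = s.image g') :
    ∀ x ∈ s, g x = g' x := by
  set e := s.orderIsoOfFin rfl with he
  have hrange : ∀ (u : Fin m → Fin m), Set.range (fun i => u ↑(e i)) = ↑(s.image u) := by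
    intro u
    ext v
    simp only [Set.mem_range, coe_image, Set.mem_image, mem_coe]
    constructor
    · rintro ⟨i, rfl⟩; exact ⟨↑(e i), (e i).2, rfl⟩
    · rintro ⟨a, ha, rfl⟩
      exact ⟨e.symm ⟨a, ha⟩, by rw [OrderIso.apply_symm_apply]⟩
  have hG : StrictAnti (fun i => g ↑(e i)) := by
    intro i j hij
    exact hg (e i).2 (e j).2 (by exact_mod_cast e.strictMono hij)
  have hG' : StrictAnti (fun i => g' ↑(e i)) := by
    intro i j hij
    exact hg' (e i).2 (e j).2 (by exact_mod_cast e.strictMono hij)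
  have heq : (fun i => g ↑(e i)) = (fun i => g' ↑(e i)) := by
    apply Set.range_injOn_strictAnti hG hG'
    rw [hrange, hrange, him]
  intro x hx
  have := congrFun heq (e.symm ⟨x, hx⟩)
  simpa [OrderIso.apply_symm_apply] using this


/-! ### decoding a staircase function into a 123-avoiding permutation -/

section Decode

variable {m : ℕ} [NeZero m]

lemma decode_exists (f : ℕ → ℕ) (hf0 : ∀ x, m ≤ x → f x = 0) (hfa : Antitone f)
    (hfb : ∀ x, x < m → f x + x < m) :
    ∃ σ : Equiv.Perm (Fin m), (¬ ContainsPat ⇑σ (id : Fin 3 → Fin 3)) ∧ rm ⇑σ = f := by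
  have hglt : ∀ x : Fin m, f ↑x < m := fun x => by have := hfb ↑x x.2; omega
  set fv : Fin m → Fin m := fun x => ⟨f ↑x, hglt x⟩ with hfv
  set D : Finset (Fin m) := univ.filter (fun x => ∀ y : Fin m, y < x → f ↑x < f ↑y) with hD
  have memD : ∀ x : Fin m, x ∈ D ↔ ∀ y : Fin m, y < x → f ↑x < f ↑y := by
    intro x; simp [hD]
  have reach : ∀ x : Fin m, ∃ z : Fin m, z ∈ D ∧ z ≤ x ∧ f ↑z = f ↑x := by
    intro x
    set S := univ.filter (fun z : Fin m => f ↑z = f ↑x) with hS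
    have hSne : S.Nonempty := ⟨x, by simp [hS]⟩
    have hzS : f ↑(S.min' hSne) = f ↑x := (mem_filter.1 (S.min'_mem hSne)).2
    refine ⟨S.min' hSne, ?_, S.min'_le x (by simp [hS]), hzS⟩
    rw [memD]
    intro y hy
    have h1 : f ↑(S.min' hSne) ≤ f ↑y := hfa (Fin.le_def.1 (le_of_lt hy))
    rcases eq_or_lt_of_le h1 with heq | hlt
    · exfalso
      have hyS : y ∈ S := by
        rw [hS, mem_filter]
        exact ⟨mem_univ y, by rw [← heq]; exact hzS⟩
      exact absurd (S.min'_le y hyS) (not_le.2 hy)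
    · exact hlt
  have injOnD : Set.InjOn fv ↑D := by
    intro x hx y hy hxy
    have hval : f ↑x = f ↑y := congrArg Fin.val hxy
    by_contra hne
    rcases lt_trichotomy x y with hc | hc | hc
    · have := (memD y).1 (mem_coe.1 hy) x hc
      omega
    · exact hne hc
    · have := (memD x).1 (mem_coe.1 hx) y hc
      omega
  set V := D.image fv with hV
  have cardW : Vᶜ.card = Dᶜ.card := by
    rw [card_compl, card_compl, hV, Finset.card_image_of_injOn injOnD]
  set c := Dᶜ.card with hc
  set eN := Dᶜ.orderIsoOfFin hc.symm with heN
  set eW := Vᶜ.orderIsoOfFin cardW with heW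
  set σfun : Fin m → Fin m :=
    fun x => if hx : x ∈ D then fv x
      else ↑(eW (Fin.rev (eN.symm ⟨x, mem_compl.2 hx⟩))) with hσfun
  have hDv : ∀ x ∈ D, σfun x = fv x := by
    intro x hx; rw [hσfun]; exact dif_pos hx
  have hND : ∀ (x : Fin m) (hx : x ∉ D),
      σfun x = ↑(eW (Fin.rev (eN.symm ⟨x, mem_compl.2 hx⟩))) := by
    intro x hx; rw [hσfun]; exact dif_neg hx
  have hWmem : ∀ (x : Fin m) (hx : x ∉ D), σfun x ∈ Vᶜ := by
    intro x hx; rw [hND x hx]; exact (eW _).2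
  have hinj : Function.Injective σfun := by
    intro x y hxy
    by_cases hx : x ∈ D <;> by_cases hy : y ∈ D
    · rw [hDv x hx, hDv y hy] at hxy
      exact injOnD (mem_coe.2 hx) (mem_coe.2 hy) hxy
    · exfalso
      have h1 := hWmem y hy
      rw [← hxy, hDv x hx] at h1
      exact (mem_compl.1 h1) (by rw [hV]; exact mem_image_of_mem fv hx)
    · exfalso
      have h1 := hWmem x hx
      rw [hxy, hDv y hy] at h1
      exact (mem_compl.1 h1) (by rw [hV]; exact mem_image_of_mem fv hy)
    · rw [hND x hx, hND y hy] at hxy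
      have h1 := eW.injective (Subtype.coe_injective hxy)
      have h2 := Fin.rev_injective h1
      have h3 := eN.symm.injective h2
      exact congrArg Subtype.val h3
  -- the crucial counting bound
  have hlow : ∀ (x : Fin m) (hx : x ∉ D), f ↑x < ↑(σfun x) := by
    intro x hx
    rw [hND x hx]
    set i := eN.symm ⟨x, mem_compl.2 hx⟩ with hi
    have sub1 : (Dᶜ.filter (· ≤ x)).card = ↑i + 1 := by
      have him : Dᶜ.filter (· ≤ x) = (Iic i).image (fun k => ↑(eN k)) := by
        ext a
        constructor
        · intro ha
          rw [mem_filter] at ha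
          rw [mem_image]
          refine ⟨eN.symm ⟨a, ha.1⟩, ?_, ?_⟩
          · rw [mem_Iic, hi]
            exact eN.symm.le_iff_le.2 (Subtype.mk_le_mk.2 ha.2)
          · rw [OrderIso.apply_symm_apply]
        · intro ha
          rw [mem_image] at ha
          obtain ⟨k, hk, rfl⟩ := ha
          rw [mem_filter]
          refine ⟨(eN k).2, ?_⟩
          rw [mem_Iic] at hk
          have h5 : eN k ≤ eN i := eN.monotone hk
          rw [hi, OrderIso.apply_symm_apply] at h5
          exact Subtype.coe_le_coe.2 h5
      have hinj2 : Function.Injective (fun k : Fin c => (↑(eN k) : Fin m)) :=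
        fun k1 k2 hk => eN.injective (Subtype.coe_injective hk)
      rw [him, Finset.card_image_of_injective _ hinj2, Fin.card_Iic]
    have split1 : (univ.filter (fun y : Fin m => y ≤ x)).card
        = (D.filter (· ≤ x)).card + (Dᶜ.filter (· ≤ x)).card := by
      rw [← card_union_of_disjoint
        (disjoint_compl_right.mono (filter_subset _ _) (filter_subset _ _))]
      congr 1
      ext a
      simp only [mem_filter, mem_union, mem_compl, mem_univ, true_and]
      tauto
    have hcard_le : (univ.filter (fun y : Fin m => y ≤ x)).card = ↑x + 1 := by
      have he : univ.filter (fun y : Fin m => y ≤ x) = Iic x := by ext a; simp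
      rw [he, Fin.card_Iic]
    have hvax : f ↑x < m := hglt x
    have htot : (univ.filter (fun w : Fin m => f ↑x < ↑w)).card = m - 1 - f ↑x := by
      have he : univ.filter (fun w : Fin m => f ↑x < ↑w) = Ioi (⟨f ↑x, hvax⟩ : Fin m) := by
        ext w; simp [Fin.lt_def]
      rw [he, Fin.card_Ioi]
    have splitV : (univ.filter (fun w : Fin m => f ↑x < ↑w)).card
        = (V.filter (fun w : Fin m => f ↑x < (w:ℕ))).card + (Vᶜ.filter (fun w : Fin m => f ↑x < (w:ℕ))).card := by
      rw [← card_union_of_disjoint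
        (disjoint_compl_right.mono (filter_subset _ _) (filter_subset _ _))]
      congr 1
      ext a
      simp only [mem_filter, mem_union, mem_compl, mem_univ, true_and]
      tauto
    obtain ⟨z0, hz0D, hz0le, hz0v⟩ := reach x
    have hVcard : (V.filter (fun w : Fin m => f ↑x < (w:ℕ))).card + 1 ≤ (D.filter (· ≤ x)).card := by
      have himg : V.filter (fun w : Fin m => f ↑x < (w:ℕ)) = (D.filter (fun z : Fin m => f ↑x < f ↑z)).image fv := by
        rw [hV, filter_image]
      have hsubs : D.filter (fun z : Fin m => f ↑x < f ↑z) ⊆ (D.filter (· ≤ x)).erase z0 := by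
        intro z hz
        rw [mem_filter] at hz
        rw [mem_erase, mem_filter]
        refine ⟨?_, hz.1, ?_⟩
        · rintro rfl
          rw [hz0v] at hz
          exact lt_irrefl _ hz.2
        · by_contra hzx
          push_neg at hzx
          have := hfa (le_of_lt (Fin.lt_def.1 hzx))
          omega
      have hc1 : (V.filter (fun w : Fin m => f ↑x < (w:ℕ))).card
          = (D.filter (fun z : Fin m => f ↑x < f ↑z)).card := by
        rw [himg]
        exact Finset.card_image_of_injOn (injOnD.mono (Finset.coe_subset.2 (filter_subset _ _)))
      have hz0mem : z0 ∈ D.filter (· ≤ x) := mem_filter.2 ⟨hz0D, hz0le⟩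
      have hle2 := Finset.card_le_card hsubs
      rw [Finset.card_erase_of_mem hz0mem] at hle2
      have hpos : 0 < (D.filter (· ≤ x)).card := card_pos.2 ⟨z0, hz0mem⟩
      omega
    have hbound := hfb ↑x x.2
    have hWcard : ↑i + 1 ≤ (Vᶜ.filter (fun w : Fin m => f ↑x < (w:ℕ))).card := by omega
    by_contra hcon
    push_neg at hcon
    have hmaps : ∀ w ∈ Vᶜ.filter (fun w : Fin m => f ↑x < (w:ℕ)),
        (fun w => if hw : w ∈ Vᶜ then eW.symm ⟨w, hw⟩ else Fin.rev i) w ∈ Ioi (Fin.rev i) := by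
      intro w hw
      rw [mem_filter] at hw
      simp only [dif_pos hw.1, mem_Ioi]
      by_contra hle
      push_neg at hle
      have h6 := eW.monotone hle
      rw [OrderIso.apply_symm_apply] at h6
      have hwle : (w : ℕ) ≤ ↑(eW (Fin.rev i)) := Subtype.coe_le_coe.2 h6
      have := hw.2
      omega
    have hinjOn : Set.InjOn (fun w => if hw : w ∈ Vᶜ then eW.symm ⟨w, hw⟩ else Fin.rev i)
        ↑(Vᶜ.filter (fun w : Fin m => f ↑x < (w:ℕ))) := by
      intro w1 h1 w2 h2 heq
      rw [mem_coe, mem_filter] at h1 h2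
      simp only [dif_pos h1.1, dif_pos h2.1] at heq
      have := eW.symm.injective heq
      exact congrArg Subtype.val this
    have hcle := Finset.card_le_card_of_injOn _ hmaps hinjOn
    rw [Fin.card_Ioi] at hcle
    have hrev : ↑(Fin.rev i) = c - 1 - ↑i := by rw [Fin.val_rev]; omega
    have hic : ↑i < c := i.2
    omega
  have hlow' : ∀ x : Fin m, f ↑x ≤ ↑(σfun x) := by
    intro x
    by_cases hx : x ∈ D
    · rw [hDv x hx]
    · exact le_of_lt (hlow x hx)
  have hbij := (Finite.injective_iff_bijective).1 hinj
  refine ⟨Equiv.ofBijective σfun hbij, ?_, ?_⟩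
  · -- avoids 123
    intro hcon
    obtain ⟨a, b, c', hab, hbc, h1, h2⟩ := containsPat3_elim hcon
    have hcoe : ∀ z, (Equiv.ofBijective σfun hbij) z = σfun z := fun z => rfl
    rw [hcoe, hcoe] at h1
    rw [hcoe, hcoe] at h2
    have hbD : b ∉ D := by
      intro hb
      have e1 : (σfun b : ℕ) = f ↑b := by rw [hDv b hb]
      have h3 := hlow' a
      have h4 : f ↑b ≤ f ↑a := hfa (Fin.le_def.1 (le_of_lt hab))
      rw [Fin.lt_def] at h1
      omega
    have hcD : c' ∉ D := by
      intro hcmem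
      have e1 : (σfun c' : ℕ) = f ↑c' := by rw [hDv c' hcmem]
      have h3 := hlow' b
      have h4 : f ↑c' ≤ f ↑b := hfa (Fin.le_def.1 (le_of_lt hbc))
      rw [Fin.lt_def] at h2
      omega
    have hbc' : eN.symm ⟨b, mem_compl.2 hbD⟩ < eN.symm ⟨c', mem_compl.2 hcD⟩ :=
      eN.symm.lt_iff_lt.2 (Subtype.mk_lt_mk.2 hbc)
    have hrev2 : Fin.rev (eN.symm ⟨c', mem_compl.2 hcD⟩)
        < Fin.rev (eN.symm ⟨b, mem_compl.2 hbD⟩) := Fin.rev_lt_rev.2 hbc'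
    have hWlt := eW.lt_iff_lt.2 hrev2
    have hfin : σfun c' < σfun b := by
      rw [hND b hbD, hND c' hcD]
      exact Subtype.coe_lt_coe.2 hWlt
    exact absurd h2 (not_lt.2 (le_of_lt hfin))
  · -- running minimum is f
    funext x
    by_cases hx : x < m
    · apply le_antisymm
      · obtain ⟨z, hzD, hzle, hzv⟩ := reach ⟨x, hx⟩
        have hr1 : rm (⇑(Equiv.ofBijective σfun hbij)) x ≤ ↑(σfun z) :=
          rm_le _ (le_trans (Fin.le_def.1 hzle) le_rfl)
        rw [hDv z hzD] at hr1
        have he1 : (fv z : ℕ) = f ↑z := rfl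
        have he2 : f ↑z = f x := hzv
        omega
      · obtain ⟨y, hyle, hyv⟩ := rm_exists (⇑(Equiv.ofBijective σfun hbij)) x
        have h1 : f x ≤ f ↑y := hfa hyle
        have h2 := hlow' y
        have h3 : (Equiv.ofBijective σfun hbij) y = σfun y := rfl
        rw [h3] at hyv
        omega
    · rw [rm_zero_of_ge _ (by omega), hf0 x (by omega)]

end Decode

/-! ### the count of 123-avoiding permutations -/

theorem card_avoid123 (m : ℕ) :
    Nat.card {σ : Equiv.Perm (Fin m) // ¬ ContainsPat ⇑σ (id : Fin 3 → Fin 3)} = catalan m := by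
  match m with
  | 0 =>
    haveI : Unique {σ : Equiv.Perm (Fin 0) // ¬ ContainsPat ⇑σ (id : Fin 3 → Fin 3)} := by
      refine ⟨⟨⟨1, ?_⟩⟩, ?_⟩
      · rintro ⟨g, -, -⟩
        exact (g 0).elim0
      · rintro ⟨σ, hσ⟩
        apply Subtype.ext
        apply Equiv.ext
        intro x
        exact x.elim0
    rw [Nat.card_unique, catalan_zero]
  | m + 1 =>
    rw [← card_SF (m+1)]
    apply Nat.card_congr
    refine Equiv.ofBijective (fun σ => (⟨rm ⇑σ.1, fun x hx => rm_zero_of_ge σ.1 hx,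
      rm_antitone ⇑σ.1, fun x hx => rm_bound ⇑σ.1 σ.1.injective hx⟩ : SF (m+1))) ⟨?_, ?_⟩
    · rintro ⟨σ, hσ⟩ ⟨σ', hσ'⟩ h
      have hrm : rm ⇑σ = rm ⇑σ' := congrArg Subtype.val h
      apply Subtype.ext
      apply Equiv.ext
      intro x
      set D : Finset (Fin (m+1)) :=
        univ.filter (fun z : Fin (m+1) => ∀ y : Fin (m+1), y < z → rm ⇑σ ↑z < rm ⇑σ ↑y) with hD
    
      have hMinσ : ∀ z ∈ D, (σ z : ℕ) = rm ⇑σ ↑z := by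
        intro z hz
        rw [hD, mem_filter] at hz
        exact (sigma_eq_rm_iff σ z).1 hz.2
      have hMinσ' : ∀ z ∈ D, (σ' z : ℕ) = rm ⇑σ' ↑z := by
        intro z hz
        rw [hD, mem_filter] at hz
        refine (sigma_eq_rm_iff σ' z).1 ?_
        intro y hy
        rw [← hrm]
        exact hz.2 y hy
      have hNotσ : ∀ z ∈ Dᶜ, (σ z : ℕ) ≠ rm ⇑σ ↑z := by
        intro z hz
        rw [mem_compl, hD, mem_filter] at hz
        intro hcon
        exact hz ⟨mem_univ z, (sigma_eq_rm_iff σ z).2 hcon⟩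
      have hNotσ' : ∀ z ∈ Dᶜ, (σ' z : ℕ) ≠ rm ⇑σ' ↑z := by
        intro z hz
        rw [mem_compl, hD, mem_filter] at hz
        intro hcon
        refine hz ⟨mem_univ z, ?_⟩
        intro y hy
        rw [hrm]
        exact (sigma_eq_rm_iff σ' z).2 hcon y hy
      by_cases hx : x ∈ D
      · exact Fin.ext (by rw [hMinσ x hx, hMinσ' x hx, hrm])
      · have hanti : StrictAntiOn ⇑σ ↑(Dᶜ) := by
          intro u hu v hv huv
          exact avoid_strictAnti σ hσ huv (hNotσ u (mem_coe.1 hu)) (hNotσ v (mem_coe.1 hv))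
        have hanti' : StrictAntiOn ⇑σ' ↑(Dᶜ) := by
          intro u hu v hv huv
          exact avoid_strictAnti σ' hσ' huv (hNotσ' u (mem_coe.1 hu)) (hNotσ' v (mem_coe.1 hv))
        have h1 : D.image ⇑σ = D.image ⇑σ' :=
          Finset.image_congr (fun z hz => Fin.ext (by
            rw [hMinσ z hz, hMinσ' z hz, hrm]))
        have h3 : ∀ τ : Equiv.Perm (Fin (m+1)), Dᶜ.image ⇑τ = univ \ D.image ⇑τ := by
          intro τ
          ext b
          simp only [mem_image, mem_sdiff, mem_univ, true_and, mem_compl]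
          constructor
          · rintro ⟨z, hz, rfl⟩
            rintro ⟨u, hu, huv⟩
            exact hz ((τ.injective huv) ▸ hu)
          · intro hb
            refine ⟨τ.symm b, ?_, by simp⟩
            intro hmem
            exact hb ⟨τ.symm b, hmem, by simp⟩
        have himD : Dᶜ.image ⇑σ = Dᶜ.image ⇑σ' := by
          rw [h3 σ, h3 σ', h1]
        exact strictAntiOn_unique hanti hanti' himD x (mem_compl.2 hx)
    · rintro ⟨f, hf0, hfa, hfb⟩
      obtain ⟨σ, hav, hrmf⟩ := decode_exists f hf0 hfa hfb
      exact ⟨⟨σ, hav⟩, Subtype.ext hrmf⟩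


/-! ### one-hole partial permutations -/

section Hole

variable {m : ℕ}

def holePP (h : Fin (m+1)) (τ : Equiv.Perm (Fin m)) : Fin (m+1) → Option (Fin m) :=
  fun i => (finSuccEquiv' h i).map ⇑τ

lemma holePP_at (h : Fin (m+1)) (τ : Equiv.Perm (Fin m)) : holePP h τ h = none := by
  simp [holePP, finSuccEquiv'_at]

lemma holePP_succAbove (h : Fin (m+1)) (τ : Equiv.Perm (Fin m)) (j : Fin m) :
    holePP h τ (h.succAbove j) = some (τ j) := by
  simp [holePP, finSuccEquiv'_succAbove]

lemma holePP_none_iff (h : Fin (m+1)) (τ : Equiv.Perm (Fin m)) (i : Fin (m+1)) :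
    holePP h τ i = none ↔ i = h := by
  unfold holePP
  rw [Option.map_eq_none_iff]
  constructor
  · intro hn
    exact (finSuccEquiv' h).injective (hn.trans (finSuccEquiv'_at h).symm)
  · rintro rfl
    exact finSuccEquiv'_at _

lemma holePP_eq_some {h : Fin (m+1)} {τ : Equiv.Perm (Fin m)} {i : Fin (m+1)} {vi : Fin m}
    (hs : holePP h τ i = some vi) : i = h.succAbove (τ.symm vi) := by
  unfold holePP at hs
  obtain ⟨j, hj1, hj2⟩ := Option.map_eq_some_iff.1 hs
  have he : finSuccEquiv' h i = some (τ.symm vi) := by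
    rw [hj1]
    congr 1
    rw [← hj2]
    simp
  have h2 := congrArg (finSuccEquiv' h).symm he
  rw [Equiv.symm_apply_apply, finSuccEquiv'_symm_some] at h2
  exact h2

lemma holePP_isPPerm (h : Fin (m+1)) (τ : Equiv.Perm (Fin m)) : IsPPerm 1 (holePP h τ) := by
  constructor
  · have he : (univ.filter fun i => holePP h τ i = none) = {h} := by
      ext i
      simp [holePP_none_iff]
    rw [he, card_singleton]
  · intro v
    refine ⟨h.succAbove (τ.symm v), ?_, fun i hi => holePP_eq_some hi⟩
    show holePP h τ (h.succAbove (τ.symm v)) = some v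
    rw [holePP_succAbove]
    simp

def extPerm (h w : Fin (m+1)) (τ : Equiv.Perm (Fin m)) : Equiv.Perm (Fin (m+1)) :=
  (finSuccEquiv' h).trans ((Equiv.optionCongr τ).trans (finSuccEquiv' w).symm)

lemma extPerm_at (h w : Fin (m+1)) (τ : Equiv.Perm (Fin m)) : extPerm h w τ h = w := by
  simp [extPerm, finSuccEquiv'_at, finSuccEquiv'_symm_none]

lemma extPerm_succAbove (h w : Fin (m+1)) (τ : Equiv.Perm (Fin m)) (j : Fin m) :
    extPerm h w τ (h.succAbove j) = w.succAbove (τ j) := by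
  simp [extPerm, finSuccEquiv'_succAbove, finSuccEquiv'_symm_some]

lemma extPerm_isExtension (h w : Fin (m+1)) (τ : Equiv.Perm (Fin m)) :
    IsExtension (extPerm h w τ) (holePP h τ) := by
  intro i j vi vj hvi hvj
  have hi := holePP_eq_some hvi
  have hj := holePP_eq_some hvj
  subst hi
  subst hj
  rw [extPerm_succAbove, extPerm_succAbove]
  simp only [Equiv.apply_symm_apply]
  exact Fin.succAbove_lt_succAbove_iff

lemma val_succAbove (w : Fin (m+1)) (v : Fin m) :
    ((w.succAbove v : Fin (m+1)) : ℕ) = if (v : ℕ) < (w : ℕ) then (v : ℕ) else (v : ℕ) + 1 := by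
  rcases lt_or_ge (Fin.castSucc v) w with hlt | hle
  · rw [Fin.succAbove_of_castSucc_lt _ _ hlt, if_pos (by exact_mod_cast hlt)]
    simp
  · rw [Fin.succAbove_of_le_castSucc _ _ hle, if_neg (by
      have : (w : ℕ) ≤ (v : ℕ) := by exact_mod_cast hle
      omega)]
    simp

lemma not_ppavoids_of_contains (h : Fin (m+1)) (τ : Equiv.Perm (Fin m))
    (hcon : ContainsPat ⇑τ (id : Fin 3 → Fin 3)) :
    ¬ PPAvoids (holePP h τ) (id : Fin 4 → Fin 4) := by
  intro hpp
  obtain ⟨a, b, c, hab, hbc, h1, h2⟩ := containsPat3_elim hcon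
  have hqab : h.succAbove a < h.succAbove b := Fin.succAbove_lt_succAbove_iff.2 hab
  have hqbc : h.succAbove b < h.succAbove c := Fin.succAbove_lt_succAbove_iff.2 hbc
  have h1' : (τ a : ℕ) < (τ b : ℕ) := h1
  have h2' : (τ b : ℕ) < (τ c : ℕ) := h2
  rcases lt_trichotomy h (h.succAbove a) with hca | hca | hca
  · -- hole first, insert minimal value
    refine hpp (extPerm h 0 τ) (extPerm_isExtension h 0 τ)
      (containsPat4_of _ h (h.succAbove a) (h.succAbove b) (h.succAbove c) hca hqab hqbc ?_ ?_ ?_)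
    · rw [extPerm_at, extPerm_succAbove, Fin.lt_def, val_succAbove]
      simp only [Fin.val_zero, Nat.not_lt_zero, ↓reduceIte]
      omega
    · rw [extPerm_succAbove, extPerm_succAbove, Fin.lt_def, val_succAbove, val_succAbove]
      simp only [Fin.val_zero, Nat.not_lt_zero, ↓reduceIte]
      omega
    · rw [extPerm_succAbove, extPerm_succAbove, Fin.lt_def, val_succAbove, val_succAbove]
      simp only [Fin.val_zero, Nat.not_lt_zero, ↓reduceIte]
      omega
  · exact absurd hca.symm (Fin.succAbove_ne h a)
  · rcases lt_trichotomy h (h.succAbove b) with hcb | hcb | hcb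
    · -- hole between positions a and b: insert (τ a).succ
      refine hpp (extPerm h (τ a).succ τ) (extPerm_isExtension h (τ a).succ τ)
        (containsPat4_of _ (h.succAbove a) h (h.succAbove b) (h.succAbove c) hca hcb hqbc ?_ ?_ ?_)
      · rw [extPerm_at, extPerm_succAbove, Fin.lt_def, val_succAbove]
        simp only [Fin.val_succ]
        split_ifs <;> omega
      · rw [extPerm_at, extPerm_succAbove, Fin.lt_def, val_succAbove]
        simp only [Fin.val_succ]
        split_ifs <;> omega
      · rw [extPerm_succAbove, extPerm_succAbove, Fin.lt_def, val_succAbove, val_succAbove]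
        simp only [Fin.val_succ]
        split_ifs <;> omega
    · exact absurd hcb.symm (Fin.succAbove_ne h b)
    · rcases lt_trichotomy h (h.succAbove c) with hcc | hcc | hcc
      · -- hole between positions b and c: insert (τ b).succ
        refine hpp (extPerm h (τ b).succ τ) (extPerm_isExtension h (τ b).succ τ)
          (containsPat4_of _ (h.succAbove a) (h.succAbove b) h (h.succAbove c) hqab hcb hcc ?_ ?_ ?_)
        · rw [extPerm_succAbove, extPerm_succAbove, Fin.lt_def, val_succAbove, val_succAbove]
          simp only [Fin.val_succ]
          split_ifs <;> omega
        · rw [extPerm_at, extPerm_succAbove, Fin.lt_def, val_succAbove]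
          simp only [Fin.val_succ]
          split_ifs <;> omega
        · rw [extPerm_at, extPerm_succAbove, Fin.lt_def, val_succAbove]
          simp only [Fin.val_succ]
          split_ifs <;> omega
      · exact absurd hcc.symm (Fin.succAbove_ne h c)
      · -- hole last: insert maximal value
        have hvc : (τ c : ℕ) < m := (τ c).2
        refine hpp (extPerm h (Fin.last m) τ) (extPerm_isExtension h (Fin.last m) τ)
          (containsPat4_of _ (h.succAbove a) (h.succAbove b) (h.succAbove c) h hqab hqbc hcc ?_ ?_ ?_)
        · rw [extPerm_succAbove, extPerm_succAbove, Fin.lt_def, val_succAbove, val_succAbove]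
          simp only [Fin.val_last]
          split_ifs <;> omega
        · rw [extPerm_succAbove, extPerm_succAbove, Fin.lt_def, val_succAbove, val_succAbove]
          simp only [Fin.val_last]
          split_ifs <;> omega
        · rw [extPerm_at, extPerm_succAbove, Fin.lt_def, val_succAbove]
          simp only [Fin.val_last]
          have hvb : (τ b : ℕ) < m := (τ b).2
          split_ifs <;> omega

lemma ppavoids_of_avoid (h : Fin (m+1)) (τ : Equiv.Perm (Fin m))
    (hav : ¬ ContainsPat ⇑τ (id : Fin 3 → Fin 3)) :
    PPAvoids (holePP h τ) (id : Fin 4 → Fin 4) := by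
  intro σ hext hcon
  obtain ⟨g, hg, hsg⟩ := (containsPat_id_iff ⇑σ).1 hcon
  have hsel : ∃ e : Fin 3 → Fin 4, StrictMono e ∧ ∀ s, g (e s) ≠ h := by
    by_cases hh : ∃ t0 : Fin 4, g t0 = h
    · obtain ⟨t0, ht0⟩ := hh
      refine ⟨t0.succAbove, Fin.strictMono_succAbove t0, ?_⟩
      intro s hgs
      have he : t0.succAbove s = t0 := hg.injective (by rw [hgs, ht0])
      exact Fin.succAbove_ne t0 s he
    · push_neg at hh
      exact ⟨Fin.castSucc, fun i j hij => Fin.castSucc_lt_castSucc_iff.2 hij, fun s => hh _⟩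
  obtain ⟨e, he, hne⟩ := hsel
  choose j hj using fun s => Fin.exists_succAbove_eq (hne s)
  have hsome : ∀ s, holePP h τ (g (e s)) = some (τ (j s)) := by
    intro s
    rw [← hj s, holePP_succAbove]
  have hjmono : StrictMono j := by
    intro s s' hss
    have hpos : g (e s) < g (e s') := hg (he hss)
    rw [← hj s, ← hj s'] at hpos
    exact Fin.succAbove_lt_succAbove_iff.1 hpos
  have hvmono : StrictMono (⇑τ ∘ j) := by
    intro s s' hss
    exact (hext _ _ _ _ (hsome s) (hsome s')).1 (hsg (he hss))
  exact hav ((containsPat_id_iff ⇑τ).2 ⟨j, hjmono, hvmono⟩)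

theorem card_one_hole (m : ℕ) :
    Nat.card {π : Fin (m+1) → Option (Fin m) // IsPPerm 1 π ∧ PPAvoids π (id : Fin 4 → Fin 4)}
      = (m + 1) * catalan m := by
  have hbij : Function.Bijective
      (fun p : Fin (m+1) × {τ : Equiv.Perm (Fin m) // ¬ ContainsPat ⇑τ (id : Fin 3 → Fin 3)} =>
        (⟨holePP p.1 p.2.1, holePP_isPPerm p.1 p.2.1, ppavoids_of_avoid p.1 p.2.1 p.2.2⟩ :
          {π : Fin (m+1) → Option (Fin m) // IsPPerm 1 π ∧ PPAvoids π (id : Fin 4 → Fin 4)})) := by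
    constructor
    · rintro ⟨h, τ, hτ⟩ ⟨h', τ', hτ'⟩ heq
      have heq2 : holePP h τ = holePP h' τ' := congrArg Subtype.val heq
      have hh : h = h' := by
        have e1 : holePP h' τ' h = none := by rw [← heq2]; exact holePP_at h τ
        exact (holePP_none_iff h' τ' h).1 e1
      subst hh
      have hττ' : τ = τ' := by
        apply Equiv.ext
        intro j
        have hc := congrFun heq2 (h.succAbove j)
        rw [holePP_succAbove, holePP_succAbove] at hc
        exact Option.some_injective _ hc
      subst hττ'
      rfl
    · rintro ⟨π, ⟨hcard, huniq⟩, havoid⟩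
      obtain ⟨h, hfil⟩ := Finset.card_eq_one.1 hcard
      have hnone : π h = none := by
        have hm : h ∈ univ.filter (fun i => π i = none) := by
          rw [hfil]; exact mem_singleton_self h
        exact (mem_filter.1 hm).2
      have hsome : ∀ j : Fin m, π (h.succAbove j) ≠ none := by
        intro j hcontra
        have hm : h.succAbove j ∈ univ.filter (fun i => π i = none) :=
          mem_filter.2 ⟨mem_univ _, hcontra⟩
        rw [hfil, mem_singleton] at hm
        exact Fin.succAbove_ne h j hm
      set u : Fin m → Fin m :=
        fun j => (π (h.succAbove j)).get (Option.isSome_iff_ne_none.2 (hsome j)) with hu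
      have hu2 : ∀ j, π (h.succAbove j) = some (u j) := by
        intro j
        rw [hu]
        exact (Option.some_get _).symm
      have huinj : Function.Injective u := by
        intro j j' hjj
        obtain ⟨i0, hi1, hi2⟩ := huniq (u j)
        have e1 := hi2 _ (hu2 j)
        have e2 := hi2 _ (show π (h.succAbove j') = some (u j) by rw [hu2 j', hjj])
        exact (Fin.strictMono_succAbove h).injective (e1.trans e2.symm)
      set τ := Equiv.ofBijective u ((Finite.injective_iff_bijective).1 huinj) with hτdef
      have hπeq : π = holePP h τ := by
        funext i
        by_cases hih : i = h
        · subst hih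
          rw [hnone, holePP_at]
        · obtain ⟨j, hj⟩ := Fin.exists_succAbove_eq hih
          rw [← hj, hu2 j, holePP_succAbove]
          rfl
      have hτav : ¬ ContainsPat ⇑τ (id : Fin 3 → Fin 3) := by
        intro hcon
        exact (not_ppavoids_of_contains h τ hcon) (hπeq ▸ havoid)
      exact ⟨⟨h, ⟨τ, hτav⟩⟩, Subtype.ext hπeq.symm⟩
  rw [← Nat.card_congr (Equiv.ofBijective _ hbij), Nat.card_prod, Nat.card_eq_fintype_card,
    Fintype.card_fin, card_avoid123]

end Hole

end PP1234

/-- `s_n^1(1234) = C(2n-2, n-1) = n · Catalan(n-1)` for `n ≥ 1`. -/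
theorem count_1234_one_hole (n : ℕ) (hn : 1 ≤ n) :
    snk n 1 (id : Fin 4 → Fin 4) = (2 * n - 2).choose (n - 1) ∧
    snk n 1 (id : Fin 4 → Fin 4) = n * catalan (n - 1) := by
  obtain ⟨m, rfl⟩ : ∃ m, n = m + 1 := ⟨n - 1, by omega⟩
  have h1 : snk (m+1) 1 (id : Fin 4 → Fin 4) = (m+1) * catalan m := PP1234.card_one_hole m
  constructor
  · rw [h1]
    have h2 := succ_mul_catalan_eq_centralBinom m
    have h3 : 2 * (m + 1) - 2 = 2 * m := by omega
    rw [h3, h2]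
    rfl
  · rw [h1]
    norm_num
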